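/- For every real B ≥ 1, the cardinality of {(x₁,x₂,x₃,y₁,y₂,y₃) ∈ ℤ³ × ℤ_{>0}³ : gcd(xᵢ,yᵢ) = 1 for all i, x₁y₂y₃ + x₂y₁y₃ + x₃y₁y₂ = 0, and max(|x₁|,y₁)·max(|x₂|,y₂)·max(|x₃|,y₃) ≤ B} equals the cardinality of {(x₁,x₂,x₃,z₁,z₂,z₃,z₄) ∈ ℤ³ × ℤ_{>0}⁴ : gcd(x₁, z₂z₃z₄) = gcd(x₂, z₁z₃z₄) = gcd(x₃, z₁z₂z₄) = 1, gcd(z₁,z₂) = gcd(z₁,z₃) = gcd(z₂,z₃) = 1, max(|x₁|, z₂z₃z₄)·max(|x₂|, z₁z₃z₄)·max(|x₃|, z₁z₂z₄) ≤ B, and x₁z₁ + x₂z₂ + x₃z₃ = 0}. -/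

import Mathlib

lemma fgcd (m n : ℕ) (hm : m ≠ 0) (hn : n ≠ 0) (p : ℕ) :
    (Nat.gcd m n).factorization p = min (m.factorization p) (n.factorization p) := by
  rw [Nat.factorization_gcd hm hn, Finsupp.inf_apply]

lemma noStrictMax (Y₁ Y₂ Y₃ : ℕ) (h₁ : Y₁ ≠ 0) (h₂ : Y₂ ≠ 0) (h₃ : Y₃ ≠ 0)
    (x₁ x₂ x₃ : ℤ) (g₁ : Int.gcd x₁ (Y₁ : ℤ) = 1)
    (heq : x₁ * Y₂ * Y₃ + x₂ * Y₁ * Y₃ + x₃ * Y₁ * Y₂ = 0)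
    (p : ℕ) (hp : p.Prime)
    (hb : Y₂.factorization p < Y₁.factorization p)
    (hc : Y₃.factorization p < Y₁.factorization p) : False := by
  set a := Y₁.factorization p with ha
  set b := Y₂.factorization p with hbb
  set c := Y₃.factorization p with hcc
  have hpY₁ : p ∣ Y₁ := dvd_trans (dvd_pow_self p (by omega : a ≠ 0)) (Nat.ordProj_dvd Y₁ p)
  have hpx : ¬ (p:ℤ) ∣ x₁ := by
    intro hd
    have hp1 : p ∣ Int.gcd x₁ (Y₁ : ℤ) :=
      Nat.dvd_gcd (Int.natCast_dvd.mp hd) (by simpa using hpY₁)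
    rw [g₁] at hp1
    exact hp.one_lt.ne' (Nat.eq_one_of_dvd_one hp1 ▸ rfl)
  have d1 : (p:ℤ)^a ∣ (Y₁:ℤ) := by exact_mod_cast Int.natCast_dvd_natCast.mpr (Nat.ordProj_dvd Y₁ p)
  have d2 : (p:ℤ)^b ∣ (Y₂:ℤ) := by exact_mod_cast Int.natCast_dvd_natCast.mpr (Nat.ordProj_dvd Y₂ p)
  have d3 : (p:ℤ)^c ∣ (Y₃:ℤ) := by exact_mod_cast Int.natCast_dvd_natCast.mpr (Nat.ordProj_dvd Y₃ p)
  have t2 : (p:ℤ)^(b+c+1) ∣ x₂ * Y₁ * Y₃ := by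
    have : (p:ℤ)^(b+c+1) ∣ (Y₁:ℤ) * (Y₃:ℤ) := by
      calc (p:ℤ)^(b+c+1) ∣ (p:ℤ)^(a+c) := pow_dvd_pow _ (by omega)
      _ = (p:ℤ)^a * (p:ℤ)^c := pow_add _ _ _
      _ ∣ (Y₁:ℤ) * (Y₃:ℤ) := mul_dvd_mul d1 d3
    calc (p:ℤ)^(b+c+1) ∣ (Y₁:ℤ) * (Y₃:ℤ) := this
    _ ∣ x₂ * Y₁ * Y₃ := ⟨x₂, by ring⟩
  have t3 : (p:ℤ)^(b+c+1) ∣ x₃ * Y₁ * Y₂ := by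
    have : (p:ℤ)^(b+c+1) ∣ (Y₁:ℤ) * (Y₂:ℤ) := by
      calc (p:ℤ)^(b+c+1) ∣ (p:ℤ)^(a+b) := pow_dvd_pow _ (by omega)
      _ = (p:ℤ)^a * (p:ℤ)^b := pow_add _ _ _
      _ ∣ (Y₁:ℤ) * (Y₂:ℤ) := mul_dvd_mul d1 d2
    calc (p:ℤ)^(b+c+1) ∣ (Y₁:ℤ) * (Y₂:ℤ) := this
    _ ∣ x₃ * Y₁ * Y₂ := ⟨x₃, by ring⟩
  have t1 : (p:ℤ)^(b+c+1) ∣ x₁ * ((Y₂:ℤ) * Y₃) := by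
    have e : x₁ * ((Y₂:ℤ) * Y₃) = -(x₂ * Y₁ * Y₃) - (x₃ * Y₁ * Y₂) := by linarith
    rw [e]
    exact dvd_sub (dvd_neg.mpr t2) t3
  have hcop : IsCoprime ((p:ℤ)^(b+c+1)) x₁ :=
    IsCoprime.pow_left (((Nat.prime_iff_prime_int.mp hp).coprime_iff_not_dvd).mpr hpx)
  have t4 : (p:ℤ)^(b+c+1) ∣ ((Y₂:ℤ) * Y₃) := hcop.dvd_of_dvd_mul_left t1
  have t5 : p^(b+c+1) ∣ Y₂ * Y₃ := by exact_mod_cast t4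
  have t6 := (Nat.Prime.pow_dvd_iff_le_factorization hp (mul_ne_zero h₂ h₃)).mp t5
  rw [Nat.factorization_mul h₂ h₃, Finsupp.add_apply] at t6
  omega

lemma construct (Y₁ Y₂ Y₃ : ℕ) (h₁ : Y₁ ≠ 0) (h₂ : Y₂ ≠ 0) (h₃ : Y₃ ≠ 0)
    (pat : ∀ p : ℕ, p.Prime →
      ¬(Y₂.factorization p < Y₁.factorization p ∧ Y₃.factorization p < Y₁.factorization p) ∧
      ¬(Y₁.factorization p < Y₂.factorization p ∧ Y₃.factorization p < Y₂.factorization p) ∧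
      ¬(Y₁.factorization p < Y₃.factorization p ∧ Y₂.factorization p < Y₃.factorization p)) :
    ∃ z₁ z₂ z₃ z₄ : ℕ, z₁ ≠ 0 ∧ z₂ ≠ 0 ∧ z₃ ≠ 0 ∧ z₄ ≠ 0 ∧
      Nat.Coprime z₁ z₂ ∧ Nat.Coprime z₁ z₃ ∧ Nat.Coprime z₂ z₃ ∧
      Y₁ = z₂*z₃*z₄ ∧ Y₂ = z₁*z₃*z₄ ∧ Y₃ = z₁*z₂*z₄ := by
  set g12 := Nat.gcd Y₁ Y₂ with hg12d
  set g13 := Nat.gcd Y₁ Y₃ with hg13d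
  set g23 := Nat.gcd Y₂ Y₃ with hg23d
  have hg12 : g12 ≠ 0 := Nat.gcd_ne_zero_left h₁
  have hg13 : g13 ≠ 0 := Nat.gcd_ne_zero_left h₁
  have hg23 : g23 ≠ 0 := Nat.gcd_ne_zero_left h₂
  set z₄ := Nat.gcd g12 Y₃ with hz4d
  have hz₄ : z₄ ≠ 0 := Nat.gcd_ne_zero_right h₃
  have hz₄p : 0 < z₄ := Nat.pos_of_ne_zero hz₄
  have solve : ∀ p : ℕ,
      (¬(Y₂.factorization p < Y₁.factorization p ∧ Y₃.factorization p < Y₁.factorization p) ∧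
      ¬(Y₁.factorization p < Y₂.factorization p ∧ Y₃.factorization p < Y₂.factorization p) ∧
      ¬(Y₁.factorization p < Y₃.factorization p ∧ Y₂.factorization p < Y₃.factorization p)) := by
    intro p
    by_cases hp : p.Prime
    · exact pat p hp
    · simp [Nat.factorization_eq_zero_of_not_prime _ hp]
  have I1 : Y₁ * z₄ = g12 * g13 := by
    apply Nat.eq_of_factorization_eq (mul_ne_zero h₁ hz₄) (mul_ne_zero hg12 hg13)
    intro p
    rw [Nat.factorization_mul h₁ hz₄, Nat.factorization_mul hg12 hg13, Finsupp.add_apply,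
      Finsupp.add_apply, hz4d, fgcd _ _ hg12 h₃, hg12d, fgcd _ _ h₁ h₂, hg13d, fgcd _ _ h₁ h₃]
    have := solve p
    omega
  have I2 : Y₂ * z₄ = g12 * g23 := by
    apply Nat.eq_of_factorization_eq (mul_ne_zero h₂ hz₄) (mul_ne_zero hg12 hg23)
    intro p
    rw [Nat.factorization_mul h₂ hz₄, Nat.factorization_mul hg12 hg23, Finsupp.add_apply,
      Finsupp.add_apply, hz4d, fgcd _ _ hg12 h₃, hg12d, fgcd _ _ h₁ h₂, hg23d, fgcd _ _ h₂ h₃]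
    have := solve p
    omega
  have I3 : Y₃ * z₄ = g13 * g23 := by
    apply Nat.eq_of_factorization_eq (mul_ne_zero h₃ hz₄) (mul_ne_zero hg13 hg23)
    intro p
    rw [Nat.factorization_mul h₃ hz₄, Nat.factorization_mul hg13 hg23, Finsupp.add_apply,
      Finsupp.add_apply, hz4d, fgcd _ _ hg12 h₃, hg12d, fgcd _ _ h₁ h₂, hg13d, fgcd _ _ h₁ h₃,
      hg23d, fgcd _ _ h₂ h₃]
    have := solve p
    omega
  have I4 : Nat.gcd g23 g13 = z₄ := by
    apply Nat.eq_of_factorization_eq (Nat.gcd_ne_zero_left hg23) hz₄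
    intro p
    rw [fgcd _ _ hg23 hg13, hz4d, fgcd _ _ hg12 h₃, hg12d, fgcd _ _ h₁ h₂, hg13d,
      fgcd _ _ h₁ h₃, hg23d, fgcd _ _ h₂ h₃]
    have := solve p
    omega
  have I5 : Nat.gcd g23 g12 = z₄ := by
    apply Nat.eq_of_factorization_eq (Nat.gcd_ne_zero_left hg23) hz₄
    intro p
    rw [fgcd _ _ hg23 hg12, hz4d, fgcd _ _ hg12 h₃, hg12d, fgcd _ _ h₁ h₂, hg23d,
      fgcd _ _ h₂ h₃]
    have := solve p
    omega
  have I6 : Nat.gcd g13 g12 = z₄ := by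
    apply Nat.eq_of_factorization_eq (Nat.gcd_ne_zero_left hg13) hz₄
    intro p
    rw [fgcd _ _ hg13 hg12, hz4d, fgcd _ _ hg12 h₃, hg12d, fgcd _ _ h₁ h₂, hg13d,
      fgcd _ _ h₁ h₃]
    have := solve p
    omega
  have d12 : z₄ ∣ g12 := Nat.gcd_dvd_left _ _
  have d13 : z₄ ∣ g13 :=
    Nat.dvd_gcd (d12.trans (Nat.gcd_dvd_left _ _)) (Nat.gcd_dvd_right _ _)
  have d23 : z₄ ∣ g23 :=
    Nat.dvd_gcd (d12.trans (Nat.gcd_dvd_right _ _)) (Nat.gcd_dvd_right _ _)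
  obtain ⟨z₃, hz3⟩ := d12
  obtain ⟨z₂, hz2⟩ := d13
  obtain ⟨z₁, hz1⟩ := d23
  refine ⟨z₁, z₂, z₃, z₄, ?_, ?_, ?_, hz₄, ?_, ?_, ?_, ?_, ?_, ?_⟩
  · rintro rfl; exact hg23 (by simp [hz1])
  · rintro rfl; exact hg13 (by simp [hz2])
  · rintro rfl; exact hg12 (by simp [hz3])
  · have : z₄ * Nat.gcd z₁ z₂ = z₄ * 1 := by
      rw [← Nat.gcd_mul_left, ← hz1, ← hz2, I4, mul_one]
    exact Nat.eq_of_mul_eq_mul_left hz₄p this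
  · have : z₄ * Nat.gcd z₁ z₃ = z₄ * 1 := by
      rw [← Nat.gcd_mul_left, ← hz1, ← hz3, I5, mul_one]
    exact Nat.eq_of_mul_eq_mul_left hz₄p this
  · have : z₄ * Nat.gcd z₂ z₃ = z₄ * 1 := by
      rw [← Nat.gcd_mul_left, ← hz2, ← hz3, I6, mul_one]
    exact Nat.eq_of_mul_eq_mul_left hz₄p this
  · apply Nat.eq_of_mul_eq_mul_right hz₄p
    rw [I1, hz3, hz2]; ring
  · apply Nat.eq_of_mul_eq_mul_right hz₄p
    rw [I2, hz3, hz1]; ring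
  · apply Nat.eq_of_mul_eq_mul_right hz₄p
    rw [I3, hz2, hz1]; ring

lemma keyZ (x₁ x₂ x₃ y₁ y₂ y₃ : ℤ) (h₁ : 0 < y₁) (h₂ : 0 < y₂) (h₃ : 0 < y₃)
    (g₁ : Int.gcd x₁ y₁ = 1) (g₂ : Int.gcd x₂ y₂ = 1) (g₃ : Int.gcd x₃ y₃ = 1)
    (heq : x₁ * y₂ * y₃ + x₂ * y₁ * y₃ + x₃ * y₁ * y₂ = 0) :
    ∃ z₁ z₂ z₃ z₄ : ℤ, 0 < z₁ ∧ 0 < z₂ ∧ 0 < z₃ ∧ 0 < z₄ ∧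
      Int.gcd z₁ z₂ = 1 ∧ Int.gcd z₁ z₃ = 1 ∧ Int.gcd z₂ z₃ = 1 ∧
      y₁ = z₂*z₃*z₄ ∧ y₂ = z₁*z₃*z₄ ∧ y₃ = z₁*z₂*z₄ := by
  obtain ⟨Y₁, rfl⟩ : ∃ n : ℕ, (n:ℤ) = y₁ := ⟨y₁.toNat, Int.toNat_of_nonneg h₁.le⟩
  obtain ⟨Y₂, rfl⟩ : ∃ n : ℕ, (n:ℤ) = y₂ := ⟨y₂.toNat, Int.toNat_of_nonneg h₂.le⟩
  obtain ⟨Y₃, rfl⟩ : ∃ n : ℕ, (n:ℤ) = y₃ := ⟨y₃.toNat, Int.toNat_of_nonneg h₃.le⟩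
  have n₁ : Y₁ ≠ 0 := by exact_mod_cast h₁.ne'
  have n₂ : Y₂ ≠ 0 := by exact_mod_cast h₂.ne'
  have n₃ : Y₃ ≠ 0 := by exact_mod_cast h₃.ne'
  have pat : ∀ p : ℕ, p.Prime →
      ¬(Y₂.factorization p < Y₁.factorization p ∧ Y₃.factorization p < Y₁.factorization p) ∧
      ¬(Y₁.factorization p < Y₂.factorization p ∧ Y₃.factorization p < Y₂.factorization p) ∧
      ¬(Y₁.factorization p < Y₃.factorization p ∧ Y₂.factorization p < Y₃.factorization p) := by
    intro p hp
    refine ⟨?_, ?_, ?_⟩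
    · rintro ⟨u, v⟩
      exact noStrictMax Y₁ Y₂ Y₃ n₁ n₂ n₃ x₁ x₂ x₃ g₁ heq p hp u v
    · rintro ⟨u, v⟩
      exact noStrictMax Y₂ Y₁ Y₃ n₂ n₁ n₃ x₂ x₁ x₃ g₂ (by linear_combination heq) p hp u v
    · rintro ⟨u, v⟩
      exact noStrictMax Y₃ Y₁ Y₂ n₃ n₁ n₂ x₃ x₁ x₂ g₃ (by linear_combination heq) p hp u v
  obtain ⟨z₁, z₂, z₃, z₄, m₁, m₂, m₃, m₄, c12, c13, c23, e₁, e₂, e₃⟩ :=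
    construct Y₁ Y₂ Y₃ n₁ n₂ n₃ pat
  refine ⟨z₁, z₂, z₃, z₄,
    by exact_mod_cast Nat.pos_of_ne_zero m₁, by exact_mod_cast Nat.pos_of_ne_zero m₂,
    by exact_mod_cast Nat.pos_of_ne_zero m₃, by exact_mod_cast Nat.pos_of_ne_zero m₄,
    by simpa using c12, by simpa using c13, by simpa using c23,
    by exact_mod_cast congrArg (Nat.cast (R := ℤ)) e₁,
    by exact_mod_cast congrArg (Nat.cast (R := ℤ)) e₂,
    by exact_mod_cast congrArg (Nat.cast (R := ℤ)) e₃⟩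

lemma inj4 (z₁ z₂ z₃ z₄ w₁ w₂ w₃ w₄ : ℤ)
    (p₁ : 0 < z₁) (p₂ : 0 < z₂) (p₃ : 0 < z₃) (p₄ : 0 < z₄)
    (q₁ : 0 < w₁) (q₂ : 0 < w₂) (q₃ : 0 < w₃) (q₄ : 0 < w₄)
    (c12 : Int.gcd z₁ z₂ = 1) (c13 : Int.gcd z₁ z₃ = 1) (c23 : Int.gcd z₂ z₃ = 1)
    (d12 : Int.gcd w₁ w₂ = 1) (d13 : Int.gcd w₁ w₃ = 1) (d23 : Int.gcd w₂ w₃ = 1)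
    (e₁ : z₂*z₃*z₄ = w₂*w₃*w₄) (e₂ : z₁*z₃*z₄ = w₁*w₃*w₄) (e₃ : z₁*z₂*z₄ = w₁*w₂*w₄) :
    z₁ = w₁ ∧ z₂ = w₂ ∧ z₃ = w₃ ∧ z₄ = w₄ := by
  obtain ⟨a₁, rfl⟩ : ∃ n : ℕ, (n:ℤ) = z₁ := ⟨z₁.toNat, Int.toNat_of_nonneg p₁.le⟩
  obtain ⟨a₂, rfl⟩ : ∃ n : ℕ, (n:ℤ) = z₂ := ⟨z₂.toNat, Int.toNat_of_nonneg p₂.le⟩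
  obtain ⟨a₃, rfl⟩ : ∃ n : ℕ, (n:ℤ) = z₃ := ⟨z₃.toNat, Int.toNat_of_nonneg p₃.le⟩
  obtain ⟨a₄, rfl⟩ : ∃ n : ℕ, (n:ℤ) = z₄ := ⟨z₄.toNat, Int.toNat_of_nonneg p₄.le⟩
  obtain ⟨b₁, rfl⟩ : ∃ n : ℕ, (n:ℤ) = w₁ := ⟨w₁.toNat, Int.toNat_of_nonneg q₁.le⟩
  obtain ⟨b₂, rfl⟩ : ∃ n : ℕ, (n:ℤ) = w₂ := ⟨w₂.toNat, Int.toNat_of_nonneg q₂.le⟩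
  obtain ⟨b₃, rfl⟩ : ∃ n : ℕ, (n:ℤ) = w₃ := ⟨w₃.toNat, Int.toNat_of_nonneg q₃.le⟩
  obtain ⟨b₄, rfl⟩ : ∃ n : ℕ, (n:ℤ) = w₄ := ⟨w₄.toNat, Int.toNat_of_nonneg q₄.le⟩
  have P₃ : 0 < a₃ := by exact_mod_cast p₃
  have P₄ : 0 < a₄ := by exact_mod_cast p₄
  have C12 : Nat.gcd a₁ a₂ = 1 := by simpa using c12
  have C13 : Nat.gcd a₁ a₃ = 1 := by simpa using c13
  have C23 : Nat.gcd a₂ a₃ = 1 := by simpa using c23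
  have D12 : Nat.gcd b₁ b₂ = 1 := by simpa using d12
  have D13 : Nat.gcd b₁ b₃ = 1 := by simpa using d13
  have D23 : Nat.gcd b₂ b₃ = 1 := by simpa using d23
  have E₁ : a₂ * (a₃ * a₄) = b₂ * (b₃ * b₄) := by
    have h : ((a₂ * (a₃ * a₄) : ℕ) : ℤ) = ((b₂ * (b₃ * b₄) : ℕ) : ℤ) := by
      push_cast; linear_combination e₁
    exact_mod_cast h
  have E₂ : a₁ * (a₃ * a₄) = b₁ * (b₃ * b₄) := by
    have h : ((a₁ * (a₃ * a₄) : ℕ) : ℤ) = ((b₁ * (b₃ * b₄) : ℕ) : ℤ) := by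
      push_cast; linear_combination e₂
    exact_mod_cast h
  have E₃ : (a₁ * a₂) * a₄ = (b₁ * b₂) * b₄ := by
    have h : (((a₁ * a₂) * a₄ : ℕ) : ℤ) = (((b₁ * b₂) * b₄ : ℕ) : ℤ) := by
      push_cast; linear_combination e₃
    exact_mod_cast h
  have G₁ : Nat.gcd (a₂ * (a₃*a₄)) (a₁ * (a₃*a₄)) = a₃*a₄ := by
    rw [Nat.gcd_mul_right, Nat.gcd_comm, C12, one_mul]
  have G₁' : Nat.gcd (b₂ * (b₃*b₄)) (b₁ * (b₃*b₄)) = b₃*b₄ := by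
    rw [Nat.gcd_mul_right, Nat.gcd_comm, D12, one_mul]
  have A34 : a₃*a₄ = b₃*b₄ := by rw [← G₁, ← G₁', E₁, E₂]
  have G₂ : Nat.gcd (a₃*a₄) ((a₁*a₂)*a₄) = a₄ := by
    rw [Nat.gcd_mul_right]
    have : Nat.Coprime a₃ (a₁*a₂) :=
      Nat.Coprime.mul_right (Nat.Coprime.symm C13) (Nat.Coprime.symm C23)
    rw [this, one_mul]
  have G₂' : Nat.gcd (b₃*b₄) ((b₁*b₂)*b₄) = b₄ := by
    rw [Nat.gcd_mul_right]
    have : Nat.Coprime b₃ (b₁*b₂) :=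
      Nat.Coprime.mul_right (Nat.Coprime.symm D13) (Nat.Coprime.symm D23)
    rw [this, one_mul]
  have A4 : a₄ = b₄ := by rw [← G₂, ← G₂', A34, E₃]
  have A3 : a₃ = b₃ := by
    have h : a₃ * a₄ = b₃ * a₄ := by rw [A34, A4]
    exact Nat.eq_of_mul_eq_mul_right P₄ h
  have A2 : a₂ = b₂ := by
    have h : a₂ * (a₃ * a₄) = b₂ * (a₃ * a₄) := by rw [E₁, A34]
    exact Nat.eq_of_mul_eq_mul_right (Nat.mul_pos P₃ P₄) h
  have A1 : a₁ = b₁ := by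
    have h : a₁ * (a₃ * a₄) = b₁ * (a₃ * a₄) := by rw [E₂, A34]
    exact Nat.eq_of_mul_eq_mul_right (Nat.mul_pos P₃ P₄) h
  exact ⟨by exact_mod_cast A1, by exact_mod_cast A2, by exact_mod_cast A3, by exact_mod_cast A4⟩

def F4 : ((ℤ×ℤ×ℤ)×(ℤ×ℤ×ℤ×ℤ)) → ((ℤ×ℤ×ℤ)×(ℤ×ℤ×ℤ)) :=
  fun w => (w.1, (w.2.2.1*w.2.2.2.1*w.2.2.2.2, w.2.1*w.2.2.2.1*w.2.2.2.2,
    w.2.1*w.2.2.1*w.2.2.2.2))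

theorem statement4 (B : ℝ) (hB : 1 ≤ B) :
    Nat.card {v : (ℤ × ℤ × ℤ) × (ℤ × ℤ × ℤ) |
        0 < v.2.1 ∧ 0 < v.2.2.1 ∧ 0 < v.2.2.2 ∧
        Int.gcd v.1.1 v.2.1 = 1 ∧ Int.gcd v.1.2.1 v.2.2.1 = 1 ∧
        Int.gcd v.1.2.2 v.2.2.2 = 1 ∧
        v.1.1 * v.2.2.1 * v.2.2.2 + v.1.2.1 * v.2.1 * v.2.2.2 +
          v.1.2.2 * v.2.1 * v.2.2.1 = 0 ∧
        max |(v.1.1 : ℝ)| (v.2.1 : ℝ) * max |(v.1.2.1 : ℝ)| (v.2.2.1 : ℝ) *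
          max |(v.1.2.2 : ℝ)| (v.2.2.2 : ℝ) ≤ B} =
    Nat.card {w : (ℤ × ℤ × ℤ) × (ℤ × ℤ × ℤ × ℤ) |
        0 < w.2.1 ∧ 0 < w.2.2.1 ∧ 0 < w.2.2.2.1 ∧ 0 < w.2.2.2.2 ∧
        Int.gcd w.1.1 (w.2.2.1 * w.2.2.2.1 * w.2.2.2.2) = 1 ∧
        Int.gcd w.1.2.1 (w.2.1 * w.2.2.2.1 * w.2.2.2.2) = 1 ∧
        Int.gcd w.1.2.2 (w.2.1 * w.2.2.1 * w.2.2.2.2) = 1 ∧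
        Int.gcd w.2.1 w.2.2.1 = 1 ∧ Int.gcd w.2.1 w.2.2.2.1 = 1 ∧
        Int.gcd w.2.2.1 w.2.2.2.1 = 1 ∧
        max |(w.1.1 : ℝ)| ((w.2.2.1 : ℝ) * (w.2.2.2.1 : ℝ) * (w.2.2.2.2 : ℝ)) *
          max |(w.1.2.1 : ℝ)| ((w.2.1 : ℝ) * (w.2.2.2.1 : ℝ) * (w.2.2.2.2 : ℝ)) *
          max |(w.1.2.2 : ℝ)| ((w.2.1 : ℝ) * (w.2.2.1 : ℝ) * (w.2.2.2.2 : ℝ)) ≤ B ∧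
        w.1.1 * w.2.1 + w.1.2.1 * w.2.2.1 + w.1.2.2 * w.2.2.2.1 = 0} := by
  refine (Nat.card_congr (Set.BijOn.equiv F4 ?_)).symm
  refine ⟨?_, ?_, ?_⟩
  · -- MapsTo
    rintro ⟨⟨x₁, x₂, x₃⟩, z₁, z₂, z₃, z₄⟩ hw
    simp only [Set.mem_setOf_eq] at hw ⊢
    obtain ⟨p₁, p₂, p₃, p₄, gx₁, gx₂, gx₃, c12, c13, c23, hht, heqs⟩ := hw
    simp only [F4]
    refine ⟨mul_pos (mul_pos p₂ p₃) p₄, mul_pos (mul_pos p₁ p₃) p₄,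
      mul_pos (mul_pos p₁ p₂) p₄, gx₁, gx₂, gx₃,
      by linear_combination (z₁*z₂*z₃*z₄^2) * heqs, ?_⟩
    push_cast
    exact hht
  · -- InjOn
    rintro ⟨⟨x₁, x₂, x₃⟩, z₁, z₂, z₃, z₄⟩ hw ⟨⟨x₁', x₂', x₃'⟩, z₁', z₂', z₃', z₄'⟩ hw' he
    simp only [Set.mem_setOf_eq] at hw hw'
    obtain ⟨p₁, p₂, p₃, p₄, _, _, _, c12, c13, c23, _, _⟩ := hw
    obtain ⟨q₁, q₂, q₃, q₄, _, _, _, d12, d13, d23, _, _⟩ := hw'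
    simp only [F4, Prod.mk.injEq] at he
    obtain ⟨⟨hx₁, hx₂, hx₃⟩, he₁, he₂, he₃⟩ := he
    obtain ⟨h1, h2, h3, h4⟩ := inj4 z₁ z₂ z₃ z₄ z₁' z₂' z₃' z₄' p₁ p₂ p₃ p₄ q₁ q₂ q₃ q₄
      c12 c13 c23 d12 d13 d23 he₁ he₂ he₃
    simp only [Prod.mk.injEq]
    exact ⟨⟨hx₁, hx₂, hx₃⟩, h1, h2, h3, h4⟩
  · -- SurjOn
    rintro ⟨⟨x₁, x₂, x₃⟩, y₁, y₂, y₃⟩ hv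
    simp only [Set.mem_setOf_eq] at hv
    obtain ⟨h₁, h₂, h₃, g₁, g₂, g₃, heq, hht⟩ := hv
    obtain ⟨z₁, z₂, z₃, z₄, p₁, p₂, p₃, p₄, c12, c13, c23, e₁, e₂, e₃⟩ :=
      keyZ x₁ x₂ x₃ y₁ y₂ y₃ h₁ h₂ h₃ g₁ g₂ g₃ heq
    have hsmall : x₁*z₁ + x₂*z₂ + x₃*z₃ = 0 := by
      rw [e₁, e₂, e₃] at heq
      have hbig : z₁*z₂*z₃*z₄^2 * (x₁*z₁+x₂*z₂+x₃*z₃) = 0 := by linear_combination heq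
      have hne : z₁*z₂*z₃*z₄^2 ≠ 0 := by positivity
      exact (mul_eq_zero.mp hbig).resolve_left hne
    refine ⟨((x₁, x₂, x₃), (z₁, z₂, z₃, z₄)), ?_, ?_⟩
    · simp only [Set.mem_setOf_eq]
      refine ⟨p₁, p₂, p₃, p₄, by rw [← e₁]; exact g₁, by rw [← e₂]; exact g₂,
        by rw [← e₃]; exact g₃, c12, c13, c23, ?_, hsmall⟩
      rw [e₁, e₂, e₃] at hht
      push_cast at hht ⊢
      exact hht
    · simp only [F4]
      rw [← e₁, ← e₂, ← e₃]
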